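/- arXiv:1503.05238 — 2 statements merged into one kernel-verified Lean document; each statement's English description precedes it below -/
import Mathlib

section
/- If (θ^k) is a sequence of Borel probability measures on [0,∞) satisfying the long-term condition, then the first moments diverge: ∫_0^∞ t dθ^k(t) → ∞ as k → ∞ (in the sense that for every M > 0, eventually ∫ t dθ^k(t) ≥ M; measures with infinite first moment count as ≥ M). -/
open MeasureTheory Set Filter
open scoped ENNReal

/-- The `s`-total variation of a Borel measure `θ` on `[0,∞)`:
`TV_s(θ) = sup_{Q Borel ⊆ [0,∞)} |θ(Q) - θ(Q+s)|`. -/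
noncomputable def TV (θ : Measure ℝ) (s : ℝ) : ℝ :=
  ⨆ Q : {Q : Set ℝ // MeasurableSet Q ∧ Q ⊆ Ici 0},
    |(θ Q.1).toReal - (θ ((fun x => x + s) '' Q.1)).toReal|

/-- The long-term condition for a sequence of measures on `[0,∞)`. -/
def LTC (θ : ℕ → Measure ℝ) : Prop :=
  ∀ S > (0:ℝ), Tendsto (fun k => ⨆ s : Icc (0:ℝ) S, TV (θ k) s) atTop (nhds 0)

lemma tv_bdd (θ : Measure ℝ) [IsProbabilityMeasure θ] (s : ℝ) :
    ∀ Q : {Q : Set ℝ // MeasurableSet Q ∧ Q ⊆ Ici 0},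
      |(θ Q.1).toReal - (θ ((fun x => x + s) '' Q.1)).toReal| ≤ 1 := by
  intro Q
  have h1 : (θ Q.1).toReal ≤ 1 := by
    have := prob_le_one (μ := θ) (s := Q.1)
    simpa using ENNReal.toReal_mono (by simp) this
  have h2 : (θ ((fun x => x + s) '' Q.1)).toReal ≤ 1 := by
    have := prob_le_one (μ := θ) (s := (fun x => x + s) '' Q.1)
    simpa using ENNReal.toReal_mono (by simp) this
  have h3 : (0:ℝ) ≤ (θ Q.1).toReal := ENNReal.toReal_nonneg
  have h4 : (0:ℝ) ≤ (θ ((fun x => x + s) '' Q.1)).toReal := ENNReal.toReal_nonneg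
  rw [abs_sub_le_iff]; constructor <;> linarith

lemma abs_le_TV (θ : Measure ℝ) [IsProbabilityMeasure θ] (s : ℝ) {Q : Set ℝ}
    (hQ : MeasurableSet Q) (hQ0 : Q ⊆ Ici 0) :
    |(θ Q).toReal - (θ ((fun x => x + s) '' Q)).toReal| ≤ TV θ s := by
  have hbdd : BddAbove (Set.range fun Q : {Q : Set ℝ // MeasurableSet Q ∧ Q ⊆ Ici 0} =>
      |(θ Q.1).toReal - (θ ((fun x => x + s) '' Q.1)).toReal|) :=
    ⟨1, by rintro x ⟨Q', rfl⟩; exact tv_bdd θ s Q'⟩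
  exact le_ciSup hbdd (⟨Q, hQ, hQ0⟩ : {Q : Set ℝ // MeasurableSet Q ∧ Q ⊆ Ici 0})

lemma TV_le_one (θ : Measure ℝ) [IsProbabilityMeasure θ] (s : ℝ) : TV θ s ≤ 1 := by
  haveI : Nonempty {Q : Set ℝ // MeasurableSet Q ∧ Q ⊆ Ici 0} :=
    ⟨⟨∅, MeasurableSet.empty, empty_subset _⟩⟩
  exact ciSup_le (tv_bdd θ s)

theorem ltc_first_moment_tendsto_top (θ : ℕ → Measure ℝ)
    (hprob : ∀ k, IsProbabilityMeasure (θ k)) (hsupp : ∀ k, θ k (Iio 0) = 0)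
    (hltc : LTC θ) :
    Tendsto (fun k => ∫⁻ t, ENNReal.ofReal t ∂(θ k)) atTop (nhds ⊤) := by
  rw [ENNReal.tendsto_nhds_top_iff_nat]
  intro n
  set M : ℝ := 2 * n + 2 with hM
  have hM0 : (0:ℝ) < M := by positivity
  set S : ℝ := 4 * (M + 1) with hS
  have hS0 : (0:ℝ) < S := by positivity
  have hev : ∀ᶠ k in atTop, (⨆ s : Icc (0:ℝ) S, TV (θ k) s) < 1/4 :=
    (hltc S hS0).eventually_lt_const (by norm_num)
  filter_upwards [hev] with k hk
  haveI := hprob k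
  -- TV bound for each shift in [0,S]
  have htv : ∀ s : Icc (0:ℝ) S, TV (θ k) s < 1/4 := by
    intro s
    refine lt_of_le_of_lt ?_ hk
    have hbdd : BddAbove (Set.range fun s : Icc (0:ℝ) S => TV (θ k) s) :=
      ⟨1, by rintro x ⟨s', rfl⟩; exact TV_le_one (θ k) s'⟩
    exact le_ciSup hbdd s
  -- key: θ k (Icc 0 M) ≤ 1/2
  set a : ℝ := (θ k (Icc 0 M)).toReal with ha
  have hb : ∀ j : ℕ, j < 4 → a - 1/4 < (θ k (Icc ((j:ℝ)*(M+1)) ((j:ℝ)*(M+1)+M))).toReal := by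
    intro j hj
    set s : ℝ := (j:ℝ)*(M+1) with hs
    have hs0 : 0 ≤ s := by positivity
    have hsS : s ≤ S := by
      have : (j:ℝ) ≤ 3 := by exact_mod_cast Nat.lt_succ_iff.mp hj
      rw [hs, hS]; nlinarith
    have h1 : |(θ k (Icc 0 M)).toReal - (θ k ((fun x => x + s) '' Icc 0 M)).toReal|
        ≤ TV (θ k) s := abs_le_TV (θ k) s measurableSet_Icc (fun x hx => hx.1)
    have h2 : TV (θ k) s < 1/4 := htv ⟨s, hs0, hsS⟩
    rw [image_add_const_Icc] at h1
    have h3 : Icc (0 + s) (M + s) = Icc s (s + M) := by rw [zero_add, add_comm M s]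
    rw [h3] at h1
    have := (abs_sub_lt_iff.mp (h1.trans_lt h2)).1
    linarith [this]
  have hsum : ∑ j ∈ Finset.range 4, θ k (Icc ((j:ℝ)*(M+1)) ((j:ℝ)*(M+1)+M)) ≤ 1 := by
    rw [← measure_biUnion_finset]
    · exact prob_le_one
    · intro i hi j hj hij
      rcases hij.lt_or_gt with h | h
      · apply Set.disjoint_left.mpr
        intro x hx hx'
        have : (i:ℝ) + 1 ≤ j := by exact_mod_cast h
        nlinarith [hx.2, hx'.1]
      · apply Set.disjoint_right.mpr
        intro x hx hx'
        have : (j:ℝ) + 1 ≤ i := by exact_mod_cast h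
        nlinarith [hx.2, hx'.1]
    · exact fun _ _ => measurableSet_Icc
  have hsumR : ∑ j ∈ Finset.range 4, (θ k (Icc ((j:ℝ)*(M+1)) ((j:ℝ)*(M+1)+M))).toReal ≤ 1 := by
    rw [← ENNReal.toReal_sum (fun j _ => measure_ne_top _ _)]
    simpa using ENNReal.toReal_mono ENNReal.one_ne_top hsum
  have ha12 : a ≤ 1/2 := by
    have h0 := hb 0 (by norm_num)
    have h1 := hb 1 (by norm_num)
    have h2 := hb 2 (by norm_num)
    have h3 := hb 3 (by norm_num)
    rw [Finset.sum_range_succ, Finset.sum_range_succ, Finset.sum_range_succ,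
      Finset.sum_range_one] at hsumR
    push_cast at h0 h1 h2 h3 hsumR
    linarith
  -- measure of tail
  have htail : ENNReal.ofReal (1/2) ≤ θ k (Ioi M) := by
    have hIcc : θ k (Icc 0 M) ≤ ENNReal.ofReal (1/2) := by
      rw [← ENNReal.ofReal_toReal (measure_ne_top (θ k) _)]
      exact ENNReal.ofReal_le_ofReal ha12
    have hunion : Icc 0 M ∪ Ioi M = Ici 0 := by
      ext x
      simp only [mem_union, mem_Icc, mem_Ioi, mem_Ici]
      constructor
      · rintro (⟨h1, _⟩ | h); exacts [h1, le_of_lt (hM0.trans h)]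
      · intro h; rcases le_or_gt x M with h' | h'
        · exact Or.inl ⟨h, h'⟩
        · exact Or.inr h'
    have hIci : θ k (Ici 0) = 1 := by
      have : θ k (Iio 0) + θ k (Ici 0) = 1 := by
        rw [← measure_union (by simp [disjoint_left]) measurableSet_Ici, Iio_union_Ici]
        exact measure_univ
      rw [hsupp k, zero_add] at this; exact this
    have h1 : (1:ℝ≥0∞) ≤ θ k (Icc 0 M) + θ k (Ioi M) := by
      calc (1:ℝ≥0∞) = θ k (Ici 0) := hIci.symm
        _ ≤ θ k (Icc 0 M ∪ Ioi M) := by rw [hunion]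
        _ ≤ _ := measure_union_le _ _
    have : (1:ℝ≥0∞) - ENNReal.ofReal (1/2) ≤ θ k (Ioi M) := by
      rw [tsub_le_iff_left]
      calc (1:ℝ≥0∞) ≤ θ k (Icc 0 M) + θ k (Ioi M) := h1
        _ ≤ ENNReal.ofReal (1/2) + θ k (Ioi M) := add_le_add hIcc le_rfl
    refine le_trans (le_of_eq ?_) this
    rw [← ENNReal.ofReal_one, ← ENNReal.ofReal_sub _ (by norm_num)]
    norm_num
  -- conclude
  have hlow : ENNReal.ofReal M * ENNReal.ofReal (1/2) ≤ ∫⁻ t, ENNReal.ofReal t ∂(θ k) := by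
    calc ENNReal.ofReal M * ENNReal.ofReal (1/2)
        ≤ ENNReal.ofReal M * θ k (Ioi M) := by
          exact mul_le_mul' le_rfl htail
      _ = ∫⁻ _ in Ioi M, ENNReal.ofReal M ∂(θ k) := by
          rw [setLIntegral_const, mul_comm]
      _ ≤ ∫⁻ t in Ioi M, ENNReal.ofReal t ∂(θ k) := by
          refine setLIntegral_mono (ENNReal.measurable_ofReal.comp measurable_id) ?_
          intro t ht
          exact ENNReal.ofReal_le_ofReal (le_of_lt ht)
      _ ≤ ∫⁻ t, ENNReal.ofReal t ∂(θ k) := setLIntegral_le_lintegral _ _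
  refine lt_of_lt_of_le ?_ hlow
  rw [← ENNReal.ofReal_mul hM0.le]
  have heq : M * (1/2) = ((n+1:ℕ):ℝ) := by rw [hM]; push_cast; ring
  rw [heq, ENNReal.ofReal_natCast]
  exact_mod_cast Nat.lt_succ_self n
end

section
/- Let (ξ^k) be a sequence of probability distributions on the positive integers and for each k let θ^k be the probability measure on [0,∞) with piecewise-constant density f_{θ^k} = Σ_{m≥1} ξ^k_m · 1_{[m−1,m)}. Then for every s ∈ [0,1] and every k, ∫_0^∞ |f_{θ^k}(t+s) − f_{θ^k}(t)| dt = s · Σ_{m≥1} |ξ^k_{m+1} − ξ^k_m|. Consequently, (θ^k) satisfies the long-term condition if and only if Σ_{m≥1} |ξ^k_{m+1} − ξ^k_m| → 0 as k → ∞. -/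
open MeasureTheory Set Filter

noncomputable def Fstep (g : ℕ → ℝ) (t : ℝ) : ℝ := if 0 ≤ t then g ⌊t⌋₊ else 0

lemma Fstep_meas (g : ℕ → ℝ) : Measurable (Fstep g) := by
  unfold Fstep
  exact Measurable.ite measurableSet_Ici (measurable_from_top.comp Nat.measurable_floor)
    measurable_const

lemma Fstep_nonneg (g : ℕ → ℝ) (hg : ∀ m, 0 ≤ g m) (t : ℝ) : 0 ≤ Fstep g t := by
  unfold Fstep; split <;> simp [hg]

lemma shift_set (h : ℝ → ENNReal) (c : ℝ) (Q : Set ℝ) :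
    ∫⁻ t in Q, h (t + c) = ∫⁻ u in (fun x => x + c) '' Q, h u := by
  have e : MeasurableEmbedding (fun x : ℝ => x + c) :=
    (measurableEmbedding_addRight c)
  have := (measurePreserving_add_right volume c).setLIntegral_comp_preimage_emb e h
    ((fun x => x + c) '' Q)
  rwa [Set.preimage_image_eq _ (add_left_injective c)] at this

lemma image_add_Ici (a c : ℝ) : (fun x : ℝ => x + c) '' Ici a = Ici (a + c) := by
  ext x; simp [Set.mem_image]

lemma shift_Ici (h : ℝ → ENNReal) (a c : ℝ) :
    ∫⁻ t in Ici a, h (t + c) = ∫⁻ u in Ici (a + c), h u := by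
  rw [shift_set, image_add_Ici]

lemma Ici_eq_iUnion : Ici (0:ℝ) = ⋃ m : ℕ, Ico (m:ℝ) (m+1) := by
  ext t
  simp only [mem_Ici, mem_iUnion, mem_Ico]
  constructor
  · intro ht
    exact ⟨⌊t⌋₊, Nat.floor_le ht, Nat.lt_floor_add_one t⟩
  · rintro ⟨m, hm, -⟩
    exact le_trans (by positivity) hm

lemma Ico_pairwise : Pairwise (Function.onFun Disjoint fun m : ℕ => Ico (m:ℝ) (m+1)) := by
  intro i j hij
  simp only [Function.onFun, Set.Ico_disjoint_Ico]
  rcases hij.lt_or_gt with h | h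
  · have : (i:ℝ) + 1 ≤ j := by exact_mod_cast h
    exact le_trans (min_le_left _ _) (le_trans this (le_max_right _ _))
  · have : (j:ℝ) + 1 ≤ i := by exact_mod_cast h
    exact le_trans (min_le_right _ _) (le_trans this (le_max_left _ _))

lemma Fstep_on_Ico (g : ℕ → ℝ) (m : ℕ) {t : ℝ} (h1 : (m:ℝ) ≤ t) (h2 : t < m + 1) :
    Fstep g t = g m := by
  have ht : (0:ℝ) ≤ t := le_trans (by positivity) h1
  have : ⌊t⌋₊ = m := (Nat.floor_eq_iff ht).2 ⟨h1, h2⟩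
  simp [Fstep, ht, this]

lemma lint_piece (g : ℕ → ℝ) {s : ℝ} (hs0 : 0 ≤ s) (hs1 : s ≤ 1) (m : ℕ) :
    ∫⁻ t in Ico (m:ℝ) (m+1), ENNReal.ofReal |Fstep g (t+s) - Fstep g t| =
      ENNReal.ofReal |g (m+1) - g m| * ENNReal.ofReal s := by
  have key : ∀ t ∈ Ico (m:ℝ) (m+1),
      ENNReal.ofReal |Fstep g (t+s) - Fstep g t| =
      (Ico ((m:ℝ)+1-s) (m+1)).indicator (fun _ => ENNReal.ofReal |g (m+1) - g m|) t := by
    rintro t ⟨h1, h2⟩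
    have hFt : Fstep g t = g m := Fstep_on_Ico g m h1 h2
    by_cases hc : (m:ℝ) + 1 - s ≤ t
    · have hFs : Fstep g (t+s) = g (m+1) := by
        exact Fstep_on_Ico g (m+1) (t := t+s) (by push_cast; linarith) (by push_cast; linarith)
      rw [Set.indicator_of_mem (Set.mem_Ico.2 ⟨hc, h2⟩), hFt, hFs]
    · push_neg at hc
      have hFs : Fstep g (t+s) = g m := by
        exact Fstep_on_Ico g m (t := t+s) (by linarith) (by linarith)
      rw [Set.indicator_of_notMem (fun hmem => absurd hmem.1 (not_le.2 hc)), hFt, hFs]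
      simp
  rw [setLIntegral_congr_fun measurableSet_Ico key]
  rw [setLIntegral_indicator measurableSet_Ico]
  have hinter : Ico ((m:ℝ)+1-s) (m+1) ∩ Ico (m:ℝ) (m+1) = Ico ((m:ℝ)+1-s) (m+1) := by
    apply inter_eq_left.2
    intro x hx
    exact ⟨le_trans (by linarith) hx.1, hx.2⟩
  rw [hinter, setLIntegral_const, Real.volume_Ico]
  congr 1
  rw [ENNReal.ofReal_eq_ofReal_iff (by linarith) hs0]
  ring

lemma lint_Ici (g : ℕ → ℝ) {s : ℝ} (hs0 : 0 ≤ s) (hs1 : s ≤ 1) :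
    ∫⁻ t in Ici (0:ℝ), ENNReal.ofReal |Fstep g (t+s) - Fstep g t| =
      (∑' m, ENNReal.ofReal |g (m+1) - g m|) * ENNReal.ofReal s := by
  rw [Ici_eq_iUnion, lintegral_iUnion (fun m => measurableSet_Ico) Ico_pairwise]
  simp only [lint_piece g hs0 hs1]
  rw [ENNReal.tsum_mul_right]

lemma lint_total_piece (g : ℕ → ℝ) (m : ℕ) :
    ∫⁻ t in Ico (m:ℝ) (m+1), ENNReal.ofReal (Fstep g t) = ENNReal.ofReal (g m) := by
  have key : ∀ t ∈ Ico (m:ℝ) (m+1), ENNReal.ofReal (Fstep g t) = ENNReal.ofReal (g m) := by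
    rintro t ⟨h1, h2⟩
    rw [Fstep_on_Ico g m h1 h2]
  rw [setLIntegral_congr_fun measurableSet_Ico key,
    setLIntegral_const, Real.volume_Ico]
  simp

lemma lint_total (g : ℕ → ℝ) :
    ∫⁻ t in Ici (0:ℝ), ENNReal.ofReal (Fstep g t) = ∑' m, ENNReal.ofReal (g m) := by
  rw [Ici_eq_iUnion, lintegral_iUnion (fun m => measurableSet_Ico) Ico_pairwise]
  simp only [lint_total_piece]

lemma lint_univ (g : ℕ → ℝ) :
    ∫⁻ t, ENNReal.ofReal (Fstep g t) = ∑' m, ENNReal.ofReal (g m) := by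
  rw [← lintegral_add_compl (fun t => ENNReal.ofReal (Fstep g t)) (measurableSet_Ici (a := (0:ℝ)))]
  have h2 : ∫⁻ t in (Ici (0:ℝ))ᶜ, ENNReal.ofReal (Fstep g t) = 0 := by
    have : ∀ t ∈ (Ici (0:ℝ))ᶜ, ENNReal.ofReal (Fstep g t) = 0 := by
      intro t ht
      simp only [mem_compl_iff, mem_Ici, not_le] at ht
      simp [Fstep, not_le.2 ht]
    rw [setLIntegral_congr_fun (measurableSet_Ici (a := (0:ℝ))).compl
      this]
    simp
  rw [h2, add_zero, lint_total]

noncomputable def Dfun (g : ℕ → ℝ) : ENNReal := ∑' m, ENNReal.ofReal |g (m+1) - g m|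

lemma lint_le_one (g : ℕ → ℝ) {s : ℝ} (hs0 : 0 ≤ s) (hs1 : s ≤ 1) :
    ∫⁻ t in Ici (0:ℝ), ENNReal.ofReal |Fstep g (t+s) - Fstep g t| ≤
      (ENNReal.ofReal s + 1) * Dfun g := by
  rw [lint_Ici g hs0 hs1, mul_comm]
  exact mul_le_mul_left le_self_add _

lemma lint_bound (g : ℕ → ℝ) : ∀ n : ℕ, ∀ s : ℝ, 0 ≤ s → s ≤ n + 1 →
    ∫⁻ t in Ici (0:ℝ), ENNReal.ofReal |Fstep g (t+s) - Fstep g t| ≤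
      (ENNReal.ofReal s + 1) * Dfun g := by
  intro n
  induction n with
  | zero => intro s hs0 hs1; exact lint_le_one g hs0 (by push_cast at hs1; linarith)
  | succ n ih =>
    intro s hs0 hsn
    by_cases hs1 : s ≤ 1
    · exact lint_le_one g hs0 hs1
    push_neg at hs1
    have key : ∀ t ∈ Ici (0:ℝ), ENNReal.ofReal |Fstep g (t+s) - Fstep g t| ≤
        ENNReal.ofReal |Fstep g (t+(s-1)+1) - Fstep g (t+(s-1))| +
        ENNReal.ofReal |Fstep g (t+(s-1)) - Fstep g t| := by
      intro t _
      have harg : t + s = t + (s-1) + 1 := by ring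
      rw [harg]
      calc ENNReal.ofReal |Fstep g (t+(s-1)+1) - Fstep g t|
          ≤ ENNReal.ofReal (|Fstep g (t+(s-1)+1) - Fstep g (t+(s-1))| +
              |Fstep g (t+(s-1)) - Fstep g t|) :=
            ENNReal.ofReal_le_ofReal (abs_sub_le _ _ _)
        _ ≤ _ := ENNReal.ofReal_add_le
    have hmeas1 : Measurable fun t : ℝ =>
        ENNReal.ofReal |Fstep g (t+(s-1)+1) - Fstep g (t+(s-1))| := by
      apply Measurable.ennreal_ofReal
      exact (((Fstep_meas g).comp ((measurable_add_const (s-1)).add_const 1)).sub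
        ((Fstep_meas g).comp (measurable_add_const (s-1)))).abs
    calc ∫⁻ t in Ici (0:ℝ), ENNReal.ofReal |Fstep g (t+s) - Fstep g t|
        ≤ ∫⁻ t in Ici (0:ℝ), (ENNReal.ofReal |Fstep g (t+(s-1)+1) - Fstep g (t+(s-1))| +
            ENNReal.ofReal |Fstep g (t+(s-1)) - Fstep g t|) :=
          setLIntegral_mono' measurableSet_Ici key
      _ = (∫⁻ t in Ici (0:ℝ), ENNReal.ofReal |Fstep g (t+(s-1)+1) - Fstep g (t+(s-1))|) +
            ∫⁻ t in Ici (0:ℝ), ENNReal.ofReal |Fstep g (t+(s-1)) - Fstep g t| :=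
          lintegral_add_left hmeas1 _
      _ ≤ Dfun g + (ENNReal.ofReal (s-1) + 1) * Dfun g := by
          gcongr
          · -- shift bound
            have hsh := shift_Ici (fun u => ENNReal.ofReal |Fstep g (u+1) - Fstep g u|) 0 (s-1)
            rw [hsh]
            calc ∫⁻ u in Ici (0+(s-1)), ENNReal.ofReal |Fstep g (u+1) - Fstep g u|
                ≤ ∫⁻ u in Ici (0:ℝ), ENNReal.ofReal |Fstep g (u+1) - Fstep g u| :=
                  lintegral_mono_set (Ici_subset_Ici.2 (by linarith))
              _ = Dfun g * ENNReal.ofReal 1 := lint_Ici g zero_le_one le_rfl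
              _ ≤ Dfun g := by simp
          · exact ih (s-1) (by linarith) (by push_cast at hsn ⊢; linarith)
      _ = (ENNReal.ofReal s + 1) * Dfun g := by
          have : ENNReal.ofReal s = ENNReal.ofReal (s-1) + 1 := by
            rw [← ENNReal.ofReal_one, ← ENNReal.ofReal_add (by linarith) zero_le_one]
            norm_num
          rw [this]
          ring

section Meas

variable (g : ℕ → ℝ)

noncomputable def θg : Measure ℝ := volume.withDensity (fun t => ENNReal.ofReal (Fstep g t))

lemma θg_apply {Q : Set ℝ} (hQ : MeasurableSet Q) :
    θg g Q = ∫⁻ t in Q, ENNReal.ofReal (Fstep g t) := withDensity_apply _ hQ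

lemma image_meas {Q : Set ℝ} (hQ : MeasurableSet Q) (c : ℝ) :
    MeasurableSet ((fun x : ℝ => x + c) '' Q) := by
  have : (fun x : ℝ => x + c) '' Q = (fun x : ℝ => x - c) ⁻¹' Q := by
    ext x
    constructor
    · rintro ⟨y, hy, rfl⟩; simpa [Set.mem_preimage] using hy
    · intro h; exact ⟨x - c, h, by ring⟩
  rw [this]
  exact (measurable_sub_const c) hQ

lemma θg_image {Q : Set ℝ} (hQ : MeasurableSet Q) (c : ℝ) :
    θg g ((fun x : ℝ => x + c) '' Q) = ∫⁻ t in Q, ENNReal.ofReal (Fstep g (t + c)) := by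
  rw [θg_apply g (image_meas hQ c), ← shift_set]

lemma θg_univ : θg g univ = ∑' m, ENNReal.ofReal (g m) := by
  rw [θg_apply g MeasurableSet.univ, Measure.restrict_univ, lint_univ]

lemma Dfun_ne_top (hg : ∀ m, 0 ≤ g m) (hfin : ∑' m, ENNReal.ofReal (g m) ≠ ⊤) :
    Dfun g ≠ ⊤ := by
  have hle : Dfun g ≤ (∑' m, ENNReal.ofReal (g m)) + ∑' m, ENNReal.ofReal (g m) := by
    calc Dfun g ≤ ∑' m, (ENNReal.ofReal (g (m+1)) + ENNReal.ofReal (g m)) := by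
          apply ENNReal.tsum_le_tsum
          intro m
          calc ENNReal.ofReal |g (m+1) - g m| ≤ ENNReal.ofReal (g (m+1) + g m) := by
                apply ENNReal.ofReal_le_ofReal
                calc |g (m+1) - g m| ≤ |g (m+1)| + |g m| := abs_sub _ _
                  _ = g (m+1) + g m := by rw [abs_of_nonneg (hg _), abs_of_nonneg (hg _)]
            _ ≤ ENNReal.ofReal (g (m+1)) + ENNReal.ofReal (g m) := ENNReal.ofReal_add_le
      _ = (∑' m, ENNReal.ofReal (g (m+1))) + ∑' m, ENNReal.ofReal (g m) := ENNReal.tsum_add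
      _ ≤ _ := add_le_add_left
          (ENNReal.tsum_comp_le_tsum_of_injective (add_left_injective 1) _) _
  exact ne_top_of_le_ne_top (ENNReal.add_ne_top.2 ⟨hfin, hfin⟩) hle

end Meas

section TVlem

variable (g : ℕ → ℝ)

instance : Nonempty {Q : Set ℝ // MeasurableSet Q ∧ Q ⊆ Ici 0} :=
  ⟨⟨∅, MeasurableSet.empty, empty_subset _⟩⟩

lemma TV_term_le (hfin : ∑' m, ENNReal.ofReal (g m) ≠ ⊤) (s : ℝ) (Q : {Q : Set ℝ // MeasurableSet Q ∧ Q ⊆ Ici 0}) :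
    |(θg g Q.1).toReal - (θg g ((fun x => x + s) '' Q.1)).toReal| ≤
      (∑' m, ENNReal.ofReal (g m)).toReal := by
  have ha : θg g Q.1 ≤ ∑' m, ENNReal.ofReal (g m) := by
    rw [← θg_univ g]; exact measure_mono (subset_univ _)
  have hb : θg g ((fun x => x + s) '' Q.1) ≤ ∑' m, ENNReal.ofReal (g m) := by
    rw [← θg_univ g]; exact measure_mono (subset_univ _)
  rw [abs_sub_le_iff]
  constructor
  · calc (θg g Q.1).toReal - _ ≤ (θg g Q.1).toReal := by
          simp [ENNReal.toReal_nonneg]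
      _ ≤ _ := ENNReal.toReal_mono hfin ha
  · calc (θg g ((fun x => x + s) '' Q.1)).toReal - _ ≤
          (θg g ((fun x => x + s) '' Q.1)).toReal := by simp [ENNReal.toReal_nonneg]
      _ ≤ _ := ENNReal.toReal_mono hfin hb

lemma TV_bdd (hfin : ∑' m, ENNReal.ofReal (g m) ≠ ⊤) (s : ℝ) : BddAbove (range fun Q : {Q : Set ℝ // MeasurableSet Q ∧ Q ⊆ Ici 0} =>
    |(θg g Q.1).toReal - (θg g ((fun x => x + s) '' Q.1)).toReal|) := by
  refine ⟨(∑' m, ENNReal.ofReal (g m)).toReal, ?_⟩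
  rintro x ⟨Q, rfl⟩
  exact TV_term_le g hfin s Q

lemma TV_nonneg (θ : Measure ℝ) (s : ℝ) : 0 ≤ TV θ s :=
  Real.iSup_nonneg fun _ => abs_nonneg _

lemma TV_le_total (hfin : ∑' m, ENNReal.ofReal (g m) ≠ ⊤) (s : ℝ) : TV (θg g) s ≤ (∑' m, ENNReal.ofReal (g m)).toReal := by
  apply ciSup_le
  intro Q
  exact TV_term_le g hfin s Q

end TVlem

lemma TV_le_bound (g : ℕ → ℝ) (hg : ∀ m, 0 ≤ g m)
    (hfin : ∑' m, ENNReal.ofReal (g m) ≠ ⊤) {s : ℝ} (hs : 0 ≤ s) :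
    TV (θg g) s ≤ ((ENNReal.ofReal s + 1) * Dfun g).toReal := by
  have hC : (ENNReal.ofReal s + 1) * Dfun g ≠ ⊤ :=
    ENNReal.mul_ne_top (ENNReal.add_ne_top.2 ⟨ENNReal.ofReal_ne_top, ENNReal.one_ne_top⟩)
      (Dfun_ne_top g hg hfin)
  apply ciSup_le
  rintro ⟨Q, hQm, hQs⟩
  simp only
  rw [θg_apply g hQm, θg_image g hQm s]
  set a := ∫⁻ t in Q, ENNReal.ofReal (Fstep g t) with ha_def
  set b := ∫⁻ t in Q, ENNReal.ofReal (Fstep g (t+s)) with hb_def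
  set c := ∫⁻ t in Q, ENNReal.ofReal |Fstep g (t+s) - Fstep g t| with hc_def
  have hcC : c ≤ (ENNReal.ofReal s + 1) * Dfun g := by
    calc c ≤ ∫⁻ t in Ici (0:ℝ), ENNReal.ofReal |Fstep g (t+s) - Fstep g t| :=
          lintegral_mono_set hQs
      _ ≤ _ := lint_bound g ⌈s⌉₊ s hs (le_trans (Nat.le_ceil s) (by linarith))
  have hc_ne : c ≠ ⊤ := ne_top_of_le_ne_top hC hcC
  have ha_ne : a ≠ ⊤ := by
    refine ne_top_of_le_ne_top hfin ?_
    calc a ≤ ∫⁻ t in Ici (0:ℝ), ENNReal.ofReal (Fstep g t) := lintegral_mono_set hQs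
      _ = _ := lint_total g
  have hb_ne : b ≠ ⊤ := by
    refine ne_top_of_le_ne_top hfin ?_
    calc b ≤ ∫⁻ t in Ici (0:ℝ), ENNReal.ofReal (Fstep g (t+s)) := lintegral_mono_set hQs
      _ = ∫⁻ u in Ici (0+s), ENNReal.ofReal (Fstep g u) := shift_Ici (fun u => ENNReal.ofReal (Fstep g u)) 0 s
      _ ≤ ∫⁻ u in Ici (0:ℝ), ENNReal.ofReal (Fstep g u) :=
          lintegral_mono_set (Ici_subset_Ici.2 (by linarith))
      _ = _ := lint_total g
  have hmeas_shift : Measurable fun t : ℝ => ENNReal.ofReal (Fstep g (t+s)) :=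
    ((Fstep_meas g).comp (measurable_add_const s)).ennreal_ofReal
  have hmeas0 : Measurable fun t : ℝ => ENNReal.ofReal (Fstep g t) :=
    (Fstep_meas g).ennreal_ofReal
  have hab : a ≤ b + c := by
    calc a ≤ ∫⁻ t in Q, (ENNReal.ofReal (Fstep g (t+s)) +
          ENNReal.ofReal |Fstep g (t+s) - Fstep g t|) := by
          apply lintegral_mono; intro t
          calc ENNReal.ofReal (Fstep g t)
              ≤ ENNReal.ofReal (Fstep g (t+s) + |Fstep g (t+s) - Fstep g t|) :=
                ENNReal.ofReal_le_ofReal (by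
                  have := neg_abs_le (Fstep g (t+s) - Fstep g t); linarith)
            _ ≤ _ := ENNReal.ofReal_add_le
      _ = b + c := lintegral_add_left hmeas_shift _
  have hba : b ≤ a + c := by
    calc b ≤ ∫⁻ t in Q, (ENNReal.ofReal (Fstep g t) +
          ENNReal.ofReal |Fstep g (t+s) - Fstep g t|) := by
          apply lintegral_mono; intro t
          calc ENNReal.ofReal (Fstep g (t+s))
              ≤ ENNReal.ofReal (Fstep g t + |Fstep g (t+s) - Fstep g t|) :=
                ENNReal.ofReal_le_ofReal (by
                  have := le_abs_self (Fstep g (t+s) - Fstep g t); linarith)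
            _ ≤ _ := ENNReal.ofReal_add_le
      _ = a + c := lintegral_add_left hmeas0 _
  have hcC' : c.toReal ≤ (((ENNReal.ofReal s) + 1) * Dfun g).toReal :=
    ENNReal.toReal_mono hC hcC
  rw [abs_sub_le_iff]
  constructor
  · have h1 : a.toReal ≤ b.toReal + c.toReal := by
      have := ENNReal.toReal_mono (ENNReal.add_ne_top.2 ⟨hb_ne, hc_ne⟩) hab
      rwa [ENNReal.toReal_add hb_ne hc_ne] at this
    linarith
  · have h1 : b.toReal ≤ a.toReal + c.toReal := by
      have := ENNReal.toReal_mono (ENNReal.add_ne_top.2 ⟨ha_ne, hc_ne⟩) hba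
      rwa [ENNReal.toReal_add ha_ne hc_ne] at this
    linarith

lemma TV_lower (g : ℕ → ℝ) (hg : ∀ m, 0 ≤ g m)
    (hfin : ∑' m, ENNReal.ofReal (g m) ≠ ⊤) :
    (Dfun g).toReal ≤ 2 * TV (θg g) 1 := by
  have hmshift : Measurable fun t : ℝ => ENNReal.ofReal (Fstep g (t+1)) :=
    ((Fstep_meas g).comp (measurable_add_const 1)).ennreal_ofReal
  have hm0 : Measurable fun t : ℝ => ENNReal.ofReal (Fstep g t) :=
    (Fstep_meas g).ennreal_ofReal
  set P := {t : ℝ | Fstep g (t+1) ≤ Fstep g t} with hP_def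
  have hPm : MeasurableSet P :=
    measurableSet_le ((Fstep_meas g).comp (measurable_add_const 1)) (Fstep_meas g)
  set Qp := Ici (0:ℝ) ∩ P with hQp_def
  set Qn := Ici (0:ℝ) ∩ Pᶜ with hQn_def
  have hQpm : MeasurableSet Qp := measurableSet_Ici.inter hPm
  have hQnm : MeasurableSet Qn := measurableSet_Ici.inter hPm.compl
  have hsubp : Qp ⊆ Ici 0 := inter_subset_left
  have hsubn : Qn ⊆ Ici 0 := inter_subset_left
  set ap := ∫⁻ t in Qp, ENNReal.ofReal (Fstep g t) with hap_def
  set bp := ∫⁻ t in Qp, ENNReal.ofReal (Fstep g (t+1)) with hbp_def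
  set an := ∫⁻ t in Qn, ENNReal.ofReal (Fstep g t) with han_def
  set bn := ∫⁻ t in Qn, ENNReal.ofReal (Fstep g (t+1)) with hbn_def
  -- finiteness
  have hfin_le : ∀ (Q : Set ℝ), Q ⊆ Ici 0 → (∫⁻ t in Q, ENNReal.ofReal (Fstep g t)) ≠ ⊤ := by
    intro Q hQ
    refine ne_top_of_le_ne_top hfin ?_
    calc ∫⁻ t in Q, ENNReal.ofReal (Fstep g t)
        ≤ ∫⁻ t in Ici (0:ℝ), ENNReal.ofReal (Fstep g t) := lintegral_mono_set hQ
      _ = _ := lint_total g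
  have hfin_le' : ∀ (Q : Set ℝ), Q ⊆ Ici 0 → (∫⁻ t in Q, ENNReal.ofReal (Fstep g (t+1))) ≠ ⊤ := by
    intro Q hQ
    refine ne_top_of_le_ne_top hfin ?_
    calc ∫⁻ t in Q, ENNReal.ofReal (Fstep g (t+1))
        ≤ ∫⁻ t in Ici (0:ℝ), ENNReal.ofReal (Fstep g (t+1)) := lintegral_mono_set hQ
      _ = ∫⁻ u in Ici ((0:ℝ)+1), ENNReal.ofReal (Fstep g u) :=
          shift_Ici (fun u => ENNReal.ofReal (Fstep g u)) 0 1
      _ ≤ ∫⁻ u in Ici (0:ℝ), ENNReal.ofReal (Fstep g u) :=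
          lintegral_mono_set (Ici_subset_Ici.2 (by linarith))
      _ = _ := lint_total g
  have hap_ne : ap ≠ ⊤ := hfin_le Qp hsubp
  have hbp_ne : bp ≠ ⊤ := hfin_le' Qp hsubp
  have han_ne : an ≠ ⊤ := hfin_le Qn hsubn
  have hbn_ne : bn ≠ ⊤ := hfin_le' Qn hsubn
  -- order
  have hple : bp ≤ ap :=
    setLIntegral_mono' hQpm fun t ht => ENNReal.ofReal_le_ofReal ht.2
  have hnle : an ≤ bn :=
    setLIntegral_mono' hQnm fun t ht => ENNReal.ofReal_le_ofReal (le_of_lt (not_le.1 ht.2))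
  -- difference identities
  have hdiffp : ap - bp = ∫⁻ t in Qp, ENNReal.ofReal |Fstep g (t+1) - Fstep g t| := by
    rw [← lintegral_sub hmshift hbp_ne ((ae_restrict_mem hQpm).mono fun t ht =>
      ENNReal.ofReal_le_ofReal ht.2)]
    apply setLIntegral_congr_fun hQpm
    intro t ht
    beta_reduce
    rw [← ENNReal.ofReal_sub _ (Fstep_nonneg g hg (t+1)), abs_sub_comm,
      abs_of_nonneg (sub_nonneg.2 ht.2)]
  have hdiffn : bn - an = ∫⁻ t in Qn, ENNReal.ofReal |Fstep g (t+1) - Fstep g t| := by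
    rw [← lintegral_sub hm0 han_ne ((ae_restrict_mem hQnm).mono fun t ht =>
      ENNReal.ofReal_le_ofReal (le_of_lt (not_le.1 ht.2)))]
    apply setLIntegral_congr_fun hQnm
    intro t ht
    have ht' : Fstep g t < Fstep g (t+1) := not_le.1 ht.2
    beta_reduce
    rw [← ENNReal.ofReal_sub _ (Fstep_nonneg g hg t),
      abs_of_nonneg (sub_nonneg.2 ht'.le)]
  -- sum identity
  have hsum : (ap - bp) + (bn - an) = Dfun g := by
    rw [hdiffp, hdiffn, ← lintegral_union hQnm (by
      exact Disjoint.mono inter_subset_right inter_subset_right disjoint_compl_right)]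
    have hQun : Qp ∪ Qn = Ici (0:ℝ) := by
      rw [hQp_def, hQn_def, ← inter_union_distrib_left, union_compl_self, inter_univ]
    rw [hQun]
    have := lint_Ici g (zero_le_one) (le_refl (1:ℝ))
    rw [this]
    simp [Dfun]
  -- TV bounds
  have hTVp : (ap - bp).toReal ≤ TV (θg g) 1 := by
    have hle := le_ciSup (TV_bdd g hfin 1) (⟨Qp, hQpm, hsubp⟩ :
      {Q : Set ℝ // MeasurableSet Q ∧ Q ⊆ Ici 0})
    simp only [θg_apply g hQpm, θg_image g hQpm 1] at hle
    rw [ENNReal.toReal_sub_of_le hple hap_ne]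
    calc ap.toReal - bp.toReal ≤ |ap.toReal - bp.toReal| := le_abs_self _
      _ ≤ _ := hle
  have hTVn : (bn - an).toReal ≤ TV (θg g) 1 := by
    have hle := le_ciSup (TV_bdd g hfin 1) (⟨Qn, hQnm, hsubn⟩ :
      {Q : Set ℝ // MeasurableSet Q ∧ Q ⊆ Ici 0})
    simp only [θg_apply g hQnm, θg_image g hQnm 1] at hle
    rw [ENNReal.toReal_sub_of_le hnle hbn_ne]
    calc bn.toReal - an.toReal ≤ |an.toReal - bn.toReal| := by
          rw [abs_sub_comm]; exact le_abs_self _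
      _ ≤ _ := hle
  -- conclude
  have hfin_p : ap - bp ≠ ⊤ := ne_top_of_le_ne_top hap_ne tsub_le_self
  have hfin_n : bn - an ≠ ⊤ := ne_top_of_le_ne_top hbn_ne tsub_le_self
  calc (Dfun g).toReal = ((ap - bp) + (bn - an)).toReal := by rw [hsum]
    _ = (ap - bp).toReal + (bn - an).toReal := ENNReal.toReal_add hfin_p hfin_n
    _ ≤ TV (θg g) 1 + TV (θg g) 1 := add_le_add hTVp hTVn
    _ = 2 * TV (θg g) 1 := by ring

theorem ltc_step_densities (ξ : ℕ → ℕ → ℝ) (hξ0 : ∀ k m, 0 ≤ ξ k m)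
    (hξ1 : ∀ k, ∑' m, ξ k m = 1)
    (f : ℕ → ℝ → ℝ)
    (hf : ∀ k t, f k t = if 0 ≤ t then ξ k ⌊t⌋₊ else 0)
    (θ : ℕ → Measure ℝ)
    (hθ : ∀ k, θ k = volume.withDensity (fun t => ENNReal.ofReal (f k t))) :
    (∀ s ∈ Icc (0:ℝ) 1, ∀ k,
        ∫ t in Ici (0:ℝ), |f k (t + s) - f k t| = s * ∑' m, |ξ k (m + 1) - ξ k m|) ∧
    (LTC θ ↔ Tendsto (fun k => ∑' m, |ξ k (m + 1) - ξ k m|) atTop (nhds 0)) := by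
  have hFeq : ∀ k, f k = Fstep (ξ k) := by
    intro k; funext t; rw [hf]; rfl
  have hθ' : ∀ k, θ k = θg (ξ k) := by
    intro k; rw [hθ k, hFeq k]; rfl
  have hsum : ∀ k, Summable (ξ k) := by
    intro k
    by_contra h
    have := hξ1 k
    rw [tsum_eq_zero_of_not_summable h] at this
    norm_num at this
  have hfin : ∀ k, ∑' m, ENNReal.ofReal (ξ k m) ≠ ⊤ := by
    intro k
    rw [← ENNReal.ofReal_tsum_of_nonneg (hξ0 k) (hsum k)]
    exact ENNReal.ofReal_ne_top
  have hDsum : ∀ k, Summable fun m => |ξ k (m + 1) - ξ k m| := by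
    intro k
    apply Summable.of_nonneg_of_le (fun m => abs_nonneg _)
      (fun m => ?_) (((summable_nat_add_iff 1).2 (hsum k)).add (hsum k))
    calc |ξ k (m+1) - ξ k m| ≤ |ξ k (m+1)| + |ξ k m| := abs_sub _ _
      _ ≤ ξ k (m+1) + ξ k m := by
          rw [abs_of_nonneg (hξ0 k _), abs_of_nonneg (hξ0 k _)]
  have hD : ∀ k, Dfun (ξ k) = ENNReal.ofReal (∑' m, |ξ k (m + 1) - ξ k m|) := by
    intro k
    rw [Dfun, ENNReal.ofReal_tsum_of_nonneg (fun m => abs_nonneg _) (hDsum k)]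
  have hDnn : ∀ k, 0 ≤ ∑' m, |ξ k (m + 1) - ξ k m| :=
    fun k => tsum_nonneg fun m => abs_nonneg _
  have hDtoReal : ∀ k, (Dfun (ξ k)).toReal = ∑' m, |ξ k (m + 1) - ξ k m| := by
    intro k; rw [hD k, ENNReal.toReal_ofReal (hDnn k)]
  have part1 : ∀ s ∈ Icc (0:ℝ) 1, ∀ k,
      ∫ t in Ici (0:ℝ), |f k (t + s) - f k t| = s * ∑' m, |ξ k (m + 1) - ξ k m| := by
    rintro s ⟨hs0, hs1⟩ k
    rw [hFeq k]
    have hmeas : AEStronglyMeasurable (fun t => |Fstep (ξ k) (t + s) - Fstep (ξ k) t|)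
        (volume.restrict (Ici (0:ℝ))) :=
      ((((Fstep_meas (ξ k)).comp (measurable_add_const s)).sub
        (Fstep_meas (ξ k))).abs).aestronglyMeasurable
    rw [integral_eq_lintegral_of_nonneg_ae
      (Filter.Eventually.of_forall fun t => abs_nonneg _) hmeas]
    rw [lint_Ici (ξ k) hs0 hs1,
      ← ENNReal.ofReal_tsum_of_nonneg (fun m => abs_nonneg _) (hDsum k),
      ← ENNReal.ofReal_mul (hDnn k), ENNReal.toReal_ofReal (mul_nonneg (hDnn k) hs0)]
    ring
  refine ⟨part1, ?_, ?_⟩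
  · -- LTC → tendsto
    intro hLTC
    have h1 := hLTC 1 one_pos
    refine squeeze_zero (g := fun k => 2 * ⨆ s : Icc (0:ℝ) 1, TV (θ k) s) hDnn
      (fun k => ?_) (by simpa using h1.const_mul 2)
    calc ∑' m, |ξ k (m + 1) - ξ k m| = (Dfun (ξ k)).toReal := (hDtoReal k).symm
      _ ≤ 2 * TV (θg (ξ k)) 1 := TV_lower (ξ k) (hξ0 k) (hfin k)
      _ = 2 * TV (θ k) 1 := by rw [hθ' k]
      _ ≤ 2 * ⨆ s : Icc (0:ℝ) 1, TV (θ k) s := by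
          have hbdd : BddAbove (range fun s : Icc (0:ℝ) 1 => TV (θ k) s) := by
            refine ⟨(∑' m, ENNReal.ofReal (ξ k m)).toReal, ?_⟩
            rintro x ⟨s, rfl⟩
            rw [hθ' k]
            exact TV_le_total (ξ k) (hfin k) s
          have := le_ciSup hbdd (⟨1, by norm_num⟩ : Icc (0:ℝ) 1)
          linarith
  · -- tendsto → LTC
    intro hT S hS
    haveI : Nonempty (Icc (0:ℝ) S) := ⟨⟨0, le_refl 0, hS.le⟩⟩
    refine squeeze_zero (g := fun k => (S+1) * ∑' m, |ξ k (m + 1) - ξ k m|)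
      (fun k => Real.iSup_nonneg fun s => TV_nonneg (θ k) s)
      (fun k => ?_) (by simpa using hT.const_mul (S+1))
    apply ciSup_le
    rintro ⟨s, hs0, hsS⟩
    calc TV (θ k) s = TV (θg (ξ k)) s := by rw [hθ' k]
      _ ≤ ((ENNReal.ofReal s + 1) * Dfun (ξ k)).toReal :=
          TV_le_bound (ξ k) (hξ0 k) (hfin k) hs0
      _ = (s + 1) * ∑' m, |ξ k (m + 1) - ξ k m| := by
          rw [ENNReal.toReal_mul, hDtoReal k, ENNReal.toReal_add ENNReal.ofReal_ne_top
            ENNReal.one_ne_top, ENNReal.toReal_ofReal hs0, ENNReal.toReal_one]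
      _ ≤ (S + 1) * ∑' m, |ξ k (m + 1) - ξ k m| :=
          mul_le_mul_of_nonneg_right (by linarith) (hDnn k)
end
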